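/- Every proper subalgebra L of M_n(K) (not assumed to contain any identity element) has dimension over K at most n(n−1) + 1 = n² − n + 1. -/

import Mathlib

open Matrix Module Function

namespace Stmt13Aux

variable {K : Type*} [Field K] {n : ℕ}

/-- Rank–nullity inequality for a map restricted to a submodule. -/
lemma finrank_le_map_add {V W : Type*} [AddCommGroup V] [Module K V]
    [AddCommGroup W] [Module K W] [FiniteDimensional K V]
    (p : Submodule K V) (f : V →ₗ[K] W) :
    finrank K p ≤ finrank K (p.map f) + finrank K ↥(p ⊓ LinearMap.ker f) := by
  have h := LinearMap.finrank_range_add_finrank_ker (f.domRestrict p)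
  have h1 : LinearMap.range (f.domRestrict p) = p.map f := by
    ext y
    simp [LinearMap.mem_range, Submodule.mem_map, LinearMap.domRestrict_apply,
      Subtype.exists]
  have h2 : (LinearMap.ker (f.domRestrict p)).map p.subtype
      = p ⊓ LinearMap.ker f := by
    ext y
    simp only [Submodule.mem_map, LinearMap.mem_ker, LinearMap.domRestrict_apply,
      Submodule.mem_inf, Subtype.exists, Submodule.coe_subtype]
    constructor
    · rintro ⟨x, hx, hfx, rfl⟩; exact ⟨hx, hfx⟩
    · rintro ⟨hy, hfy⟩; exact ⟨y, hy, hfy, rfl⟩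
  have h3 : finrank K ↥(LinearMap.ker (f.domRestrict p))
      = finrank K ↥(p ⊓ LinearMap.ker f) := by
    rw [← h2, Submodule.finrank_map_subtype_eq]
  rw [h1, h3] at h
  omega

lemma pair_smul {V : Type*} [AddCommGroup V] [Module K V] {x y : V}
    (hy : y ≠ 0) (h : ¬ LinearIndependent K ![x, y]) : ∃ c : K, x = c • y := by
  rw [LinearIndependent.pair_iff] at h
  push_neg at h
  obtain ⟨s, t, hst, hne⟩ := h
  by_cases hs : s = 0
  · subst hs
    simp only [zero_smul, zero_add] at hst
    rcases smul_eq_zero.mp hst with ht | hy0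
    · exact absurd ht (hne rfl)
    · exact absurd hy0 hy
  · refine ⟨-(t / s), ?_⟩
    have hx : x = s⁻¹ • (s • x) := by rw [smul_smul, inv_mul_cancel₀ hs, one_smul]
    rw [hx, eq_neg_of_add_eq_zero_left hst]
    rw [smul_neg, smul_smul, neg_smul, div_eq_inv_mul]

lemma pair_indep {V : Type*} [AddCommGroup V] [Module K V] {x y : V}
    (hx : x ≠ 0) (h : y ∉ Submodule.span K {x}) :
    LinearIndependent K ![x, y] := by
  rw [LinearIndependent.pair_iff]
  intro s t hst
  have ht : t = 0 := by
    by_contra ht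
    apply h
    have h1 : t • y = -(s • x) := eq_neg_of_add_eq_zero_left (by rwa [add_comm] at hst)
    have : y = -(s / t) • x := by
      calc y = t⁻¹ • (t • y) := by rw [smul_smul, inv_mul_cancel₀ ht, one_smul]
      _ = -(s / t) • x := by rw [h1, smul_neg, smul_smul, neg_smul, div_eq_inv_mul]
    rw [this]
    exact Submodule.smul_mem _ _ (Submodule.mem_span_singleton_self x)
  subst ht
  simp only [zero_smul, add_zero] at hst
  rcases smul_eq_zero.mp hst with hs | hx0
  · exact ⟨hs, rfl⟩
  · exact absurd hx0 hx

/-- Given two linearly independent vectors, a matrix can send them anywhere. -/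
lemma exists_matrix {a₁ a₂ : Fin n → K} (h : LinearIndependent K ![a₁, a₂])
    (y₁ y₂ : Fin n → K) :
    ∃ x : Matrix (Fin n) (Fin n) K, x *ᵥ a₁ = y₁ ∧ x *ᵥ a₂ = y₂ := by
  classical
  have hne : a₁ ≠ a₂ := by
    intro he
    have h0 : (![a₁, a₂] : Fin 2 → (Fin n → K)) 0 = ![a₁, a₂] 1 := by simp [he]
    exact (by decide : ¬((0 : Fin 2) = 1)) (h.injective h0)
  have hs : LinearIndepOn K id (Set.range ![a₁, a₂]) :=
    (linearIndepOn_id_range_iff h.injective).mpr h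
  let B := Basis.extend hs
  have hmem : ∀ z ∈ Set.range ![a₁, a₂], z ∈ hs.extend (Set.subset_univ _) :=
    fun z hz => hs.subset_extend _ hz
  have ha₁ : a₁ ∈ hs.extend (Set.subset_univ _) := hmem a₁ ⟨0, rfl⟩
  have ha₂ : a₂ ∈ hs.extend (Set.subset_univ _) := hmem a₂ ⟨1, rfl⟩
  let g : hs.extend (Set.subset_univ _) → (Fin n → K) := fun z =>
    if (z : Fin n → K) = a₁ then y₁ else if (z : Fin n → K) = a₂ then y₂ else 0
  let f : (Fin n → K) →ₗ[K] (Fin n → K) := B.constr K g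
  have hf1 : f a₁ = y₁ := by
    have : f (B ⟨a₁, ha₁⟩) = g ⟨a₁, ha₁⟩ := B.constr_basis K g _
    rwa [Basis.extend_apply_self, show g ⟨a₁, ha₁⟩ = y₁ by simp [g]] at this
  have hf2 : f a₂ = y₂ := by
    have : f (B ⟨a₂, ha₂⟩) = g ⟨a₂, ha₂⟩ := B.constr_basis K g _
    rwa [Basis.extend_apply_self, show g ⟨a₂, ha₂⟩ = y₂ by simp [g, hne.symm]] at this
  refine ⟨LinearMap.toMatrix' f, ?_, ?_⟩
  · rw [← Matrix.toLin'_apply, Matrix.toLin'_toMatrix']; exact hf1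
  · rw [← Matrix.toLin'_apply, Matrix.toLin'_toMatrix']; exact hf2

lemma mul_vecMulVec (x : Matrix (Fin n) (Fin n) K) (a b : Fin n → K) :
    x * vecMulVec a b = vecMulVec (x *ᵥ a) b := by
  ext i j
  simp only [Matrix.mul_apply, vecMulVec_apply, Matrix.mulVec, dotProduct,
    Finset.sum_mul]
  exact Finset.sum_congr rfl fun k _ => (mul_assoc _ _ _).symm

lemma vecMulVec_mul (a b : Fin n → K) (x : Matrix (Fin n) (Fin n) K) :
    vecMulVec a b * x = vecMulVec a (b ᵥ* x) := by
  ext i j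
  simp only [Matrix.mul_apply, vecMulVec_apply, Matrix.vecMul, dotProduct,
    Finset.mul_sum]
  exact Finset.sum_congr rfl fun k _ => (mul_assoc _ _ _)

lemma vecMulVec_mulVec (w b e : Fin n → K) :
    (vecMulVec w b) *ᵥ e = (b ⬝ᵥ e) • w := by
  ext i
  simp only [Matrix.mulVec, dotProduct, vecMulVec_apply, Pi.smul_apply,
    smul_eq_mul, Finset.sum_mul]
  exact Finset.sum_congr rfl fun k _ => by ring

lemma vecMul_vecMulVec (b c w : Fin n → K) :
    b ᵥ* (vecMulVec c w) = (b ⬝ᵥ c) • w := by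
  ext j
  simp only [Matrix.vecMul, dotProduct, vecMulVec_apply, Pi.smul_apply,
    smul_eq_mul, Finset.sum_mul]
  exact Finset.sum_congr rfl fun k _ => by ring

/-- `x ↦ x *ᵥ a` as a linear map on matrices. -/
def mulVecRight (a : Fin n → K) : Matrix (Fin n) (Fin n) K →ₗ[K] (Fin n → K) where
  toFun x := x *ᵥ a
  map_add' x y := Matrix.add_mulVec x y a
  map_smul' c x := by rw [Matrix.smul_mulVec]; rfl

@[simp] lemma mulVecRight_apply (a : Fin n → K) (x : Matrix (Fin n) (Fin n) K) :
    mulVecRight a x = x *ᵥ a := rfl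

/-- `x ↦ b ᵥ* x` as a linear map on matrices. -/
def vecMulLeft (b : Fin n → K) : Matrix (Fin n) (Fin n) K →ₗ[K] (Fin n → K) where
  toFun x := b ᵥ* x
  map_add' x y := Matrix.vecMul_add x y b
  map_smul' c x := by ext j; simp [Matrix.vecMul, dotProduct, Finset.mul_sum,
    mul_left_comm]

@[simp] lemma vecMulLeft_apply (b : Fin n → K) (x : Matrix (Fin n) (Fin n) K) :
    vecMulLeft b x = b ᵥ* x := rfl

/-- `w ↦ vecMulVec w b` as a linear map. -/
def vecMulVecRight (b : Fin n → K) : (Fin n → K) →ₗ[K] Matrix (Fin n) (Fin n) K where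
  toFun w := vecMulVec w b
  map_add' x y := by ext i j; simp [vecMulVec_apply, add_mul]
  map_smul' c x := by ext i j; simp [vecMulVec_apply, mul_assoc]

@[simp] lemma vecMulVecRight_apply (b w : Fin n → K) :
    vecMulVecRight b w = vecMulVec w b := rfl

/-- `u ↦ vecMulVec a u` as a linear map. -/
def vecMulVecLeft (a : Fin n → K) : (Fin n → K) →ₗ[K] Matrix (Fin n) (Fin n) K where
  toFun u := vecMulVec a u
  map_add' x y := by ext i j; simp [vecMulVec_apply, mul_add]
  map_smul' c x := by ext i j; simp [vecMulVec_apply, mul_left_comm]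

@[simp] lemma vecMulVecLeft_apply (a u : Fin n → K) :
    vecMulVecLeft a u = vecMulVec a u := rfl

lemma mulVecRight_surjective {a : Fin n → K} (ha : a ≠ 0) :
    Surjective (mulVecRight (K := K) a) := by
  classical
  intro y
  obtain ⟨j, hj⟩ : ∃ j, a j ≠ 0 := by
    by_contra hc; push_neg at hc; exact ha (funext hc)
  refine ⟨vecMulVec ((a j)⁻¹ • y) (Pi.single j 1), ?_⟩
  rw [mulVecRight_apply, vecMulVec_mulVec, single_dotProduct, one_mul,
    smul_smul, mul_inv_cancel₀ hj, one_smul]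

lemma vecMulLeft_surjective {b : Fin n → K} (hb : b ≠ 0) :
    Surjective (vecMulLeft (K := K) b) := by
  classical
  intro y
  obtain ⟨j, hj⟩ : ∃ j, b j ≠ 0 := by
    by_contra hc; push_neg at hc; exact hb (funext hc)
  refine ⟨vecMulVec (Pi.single j 1) ((b j)⁻¹ • y), ?_⟩
  rw [vecMulLeft_apply, vecMul_vecMulVec, dotProduct_single, mul_one,
    smul_smul, mul_inv_cancel₀ hj, one_smul]

/-- The trace pairing as a map into the dual. -/
noncomputable def tp : Matrix (Fin n) (Fin n) K →ₗ[K] Module.Dual K (Matrix (Fin n) (Fin n) K) where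
  toFun a := (Matrix.traceLinearMap (Fin n) K K).comp (LinearMap.mulLeft K a)
  map_add' a b := by ext x; simp [add_mul]
  map_smul' c a := by ext x; simp [smul_mul_assoc]

@[simp] lemma tp_apply (a x : Matrix (Fin n) (Fin n) K) : tp a x = (a * x).trace := rfl

lemma tp_injective : Injective (tp (K := K) (n := n)) := by
  classical
  rw [injective_iff_map_eq_zero]
  intro a ha
  ext i j
  have := congrArg (fun φ => φ (Matrix.single j i (1 : K))) ha
  simp only [tp_apply, LinearMap.zero_apply] at this
  rw [Matrix.trace, Finset.sum_eq_single i] at this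
  · simpa [Matrix.diag] using this
  · intro k _ hk
    simpa [Matrix.diag] using Matrix.mul_single_apply_of_ne (c := (1 : K)) j i k k hk a
  · simp

end Stmt13Aux

open Stmt13Aux

set_option maxHeartbeats 2000000 in
/-- Every proper subalgebra `L` of `Mₙ(K)` (not assumed unital)
has dimension at most `n(n-1) + 1 = n² - n + 1`. -/
theorem stmt13 (K : Type*) [Field K] [CharZero K] (n : ℕ)
    (L : NonUnitalSubalgebra K (Matrix (Fin n) (Fin n) K))
    (hL : L ≠ ⊤) :
    Module.finrank K L ≤ n * (n - 1) + 1 := by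
  classical
  by_contra hcon
  push_neg at hcon
  have hA : finrank K (Matrix (Fin n) (Fin n) K) = n * n := by
    rw [Module.finrank_matrix]; simp
  set W₁ : Submodule K (Matrix (Fin n) (Fin n) K) := L.toSubmodule with hW₁
  have hdL : finrank K ↥L = finrank K ↥W₁ := by
    refine LinearEquiv.finrank_eq ?_
    exact { toFun := fun x => ⟨x.1, (NonUnitalSubalgebra.mem_toSubmodule L).mpr x.2⟩
            invFun := fun x => ⟨x.1, (NonUnitalSubalgebra.mem_toSubmodule L).mp x.2⟩
            map_add' := fun x y => rfl
            map_smul' := fun c x => rfl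
            left_inv := fun x => rfl
            right_inv := fun x => rfl }
  rw [hdL] at hcon
  -- the trace pairing map into the dual is surjective
  have htps : Surjective (tp (K := K) (n := n)) :=
    (LinearMap.injective_iff_surjective_of_finrank_eq_finrank
      (Subspace.dual_finrank_eq).symm).mp tp_injective
  set Φ : Matrix (Fin n) (Fin n) K →ₗ[K] Module.Dual K ↥W₁ :=
    (W₁.subtype.dualMap).comp tp with hΦ
  have hΦs : Surjective Φ := by
    rw [hΦ, LinearMap.coe_comp]
    exact (LinearMap.dualMap_surjective_of_injective W₁.injective_subtype).comp htps
  set V : Submodule K (Matrix (Fin n) (Fin n) K) := LinearMap.ker Φ with hV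
  have hmemV : ∀ a, a ∈ V ↔ ∀ x ∈ L, ((a * x).trace = 0) := by
    intro a
    constructor
    · intro haV x hx
      have h0 := LinearMap.mem_ker.mp haV
      have := congrArg (fun φ => φ (⟨x, hx⟩ : W₁)) h0
      simpa [hΦ, LinearMap.dualMap_apply] using this
    · intro hall
      rw [hV, LinearMap.mem_ker]
      ext w
      simpa [hΦ, LinearMap.dualMap_apply] using hall (w : Matrix (Fin n) (Fin n) K) w.2
  have hsum : finrank K ↥W₁ + finrank K ↥V = n * n := by
    have h := LinearMap.finrank_range_add_finrank_ker Φ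
    rw [LinearMap.range_eq_top.mpr hΦs, finrank_top, Subspace.dual_finrank_eq, hA] at h
    linarith
  have hBA : n * (n - 1) + n = n * n := by
    rcases Nat.eq_zero_or_pos n with h | h
    · rw [h]
    · have h2 : n - 1 + 1 = n := Nat.succ_pred_eq_of_pos h
      calc n * (n - 1) + n = n * ((n - 1) + 1) := by ring
      _ = n * n := by rw [h2]
  have hn2 : 2 ≤ n := by linarith
  by_cases hVbot : V = ⊥
  · have hc0 : finrank K ↥V = 0 := by rw [hVbot]; exact finrank_bot K _
    have hd : finrank K ↥W₁ = finrank K (Matrix (Fin n) (Fin n) K) := by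
      rw [hA]; linarith
    have hW : W₁ = ⊤ := Submodule.eq_top_of_finrank_eq hd
    exact hL (NonUnitalAlgebra.toSubmodule_eq_top.mp hW)
  -- the bimodule property of V
  have hVr : ∀ a ∈ V, ∀ x ∈ L, a * x ∈ V := by
    intro a ha x hx
    rw [hmemV]
    intro y hy
    rw [mul_assoc]
    exact (hmemV a).mp ha (x * y) (mul_mem hx hy)
  have hVl : ∀ a ∈ V, ∀ x ∈ L, x * a ∈ V := by
    intro a ha x hx
    rw [hmemV]
    intro y hy
    have heq : (x * a * y).trace = (a * (y * x)).trace := by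
      rw [mul_assoc, Matrix.trace_mul_comm, mul_assoc]
    rw [heq]
    exact (hmemV a).mp ha (y * x) (mul_mem hy hx)
  -- Key step A: no element of V can map two vectors to independent vectors
  have keyA : ∀ v' ∈ V, ∀ e₁ e₂ : Fin n → K,
      ¬ LinearIndependent K ![v' *ᵥ e₁, v' *ᵥ e₂] := by
    intro v' hv' e₁ e₂ hind
    set ψ := (mulVecRight (K := K) (v' *ᵥ e₁)).prod (mulVecRight (K := K) (v' *ᵥ e₂)) with hψ
    have hψs : Surjective ψ := by
      rintro ⟨y₁, y₂⟩
      obtain ⟨x, hx1, hx2⟩ := exists_matrix hind y₁ y₂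
      refine ⟨x, ?_⟩
      have hxx : ψ x = (x *ᵥ (v' *ᵥ e₁), x *ᵥ (v' *ᵥ e₂)) := rfl
      rw [hxx, hx1, hx2]
    have hkψ : finrank K ↥(LinearMap.ker ψ) + (n + n) = n * n := by
      have h := LinearMap.finrank_range_add_finrank_ker ψ
      rw [LinearMap.range_eq_top.mpr hψs, finrank_top, Module.finrank_prod,
        Module.finrank_pi, Fintype.card_fin, hA] at h
      linarith
    set f := LinearMap.mulRight K v' with hf
    have hmap : W₁.map f ≤ V := by
      rintro _ ⟨x, hx, rfl⟩
      have : f x = x * v' := rfl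
      rw [this]
      exact hVl v' hv' x ((NonUnitalSubalgebra.mem_toSubmodule L).mp hx)
    have hker : W₁ ⊓ LinearMap.ker f ≤ LinearMap.ker ψ := by
      intro x hx
      have h0 : x * v' = 0 := hx.2
      have t1 : x *ᵥ (v' *ᵥ e₁) = 0 := by
        rw [Matrix.mulVec_mulVec, h0, Matrix.zero_mulVec]
      have t2 : x *ᵥ (v' *ᵥ e₂) = 0 := by
        rw [Matrix.mulVec_mulVec, h0, Matrix.zero_mulVec]
      rw [LinearMap.mem_ker]
      have hxx : ψ x = (x *ᵥ (v' *ᵥ e₁), x *ᵥ (v' *ᵥ e₂)) := rfl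
      rw [hxx, t1, t2]
      rfl
    have h1 := finrank_le_map_add W₁ f
    have h2 : finrank K ↥(W₁.map f) ≤ finrank K ↥V := Submodule.finrank_mono hmap
    have h3 : finrank K ↥(W₁ ⊓ LinearMap.ker f) ≤ finrank K ↥(LinearMap.ker ψ) :=
      Submodule.finrank_mono hker
    linarith
  -- choose a nonzero element of V; it is a rank one matrix
  obtain ⟨v, hvV, hv0⟩ := Submodule.exists_mem_ne_zero_of_ne_bot hVbot
  obtain ⟨a, b, ha0, hb0, hvab⟩ : ∃ a b : Fin n → K, a ≠ 0 ∧ b ≠ 0 ∧ v = vecMulVec a b := by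
    obtain ⟨i₀, j₀, hij⟩ : ∃ i j, v i j ≠ 0 := by
      by_contra hcc; push_neg at hcc
      exact hv0 (by ext i j; simpa using hcc i j)
    set a : Fin n → K := fun i => v i j₀ with haa
    have ha0 : a ≠ 0 := fun h => hij (congrFun h i₀)
    have hcols : ∀ j : Fin n, ∃ cj : K, (fun i => v i j) = cj • a := by
      intro j
      have hnli : ¬ LinearIndependent K ![(fun i => v i j), a] := by
        intro hli
        apply keyA v hvV (Pi.single j 1) (Pi.single j₀ 1)
        have e1 : v *ᵥ Pi.single j 1 = fun i => v i j := by
          rw [Matrix.mulVec_single_one]; rfl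
        have e2 : v *ᵥ Pi.single j₀ 1 = a := by
          rw [Matrix.mulVec_single_one]; rfl
        rw [e1, e2]; exact hli
      exact pair_smul ha0 hnli
    choose bb hbb using hcols
    refine ⟨a, bb, ha0, ?_, ?_⟩
    · intro hbz
      apply hv0; ext i j
      have h4 := congrFun (hbb j) i
      simp only [Pi.smul_apply, smul_eq_mul] at h4
      have h5 : bb j = 0 := congrFun hbz j
      rw [h5, zero_mul] at h4
      simpa using h4
    · ext i j
      have h4 := congrFun (hbb j) i
      simp only [Pi.smul_apply, smul_eq_mul] at h4
      rw [vecMulVec_apply, h4, mul_comm]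
  -- the space S of rows w with w ⊗ b ∈ V has dimension ≥ 2
  set S := V.comap (vecMulVecRight (K := K) b) with hSdef
  have hmapS : W₁.map (mulVecRight (K := K) a) ≤ S := by
    rintro _ ⟨x, hx, rfl⟩
    simp only [hSdef, Submodule.mem_comap, vecMulVecRight_apply, mulVecRight_apply]
    rw [← Stmt13Aux.mul_vecMulVec, ← hvab]
    exact hVl v hvV x ((NonUnitalSubalgebra.mem_toSubmodule L).mp hx)
  have hkerA : finrank K ↥(LinearMap.ker (mulVecRight (K := K) a)) + n = n * n := by
    have h := LinearMap.finrank_range_add_finrank_ker (mulVecRight (K := K) a)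
    rw [LinearMap.range_eq_top.mpr (mulVecRight_surjective ha0), finrank_top,
      Module.finrank_pi, Fintype.card_fin, hA] at h
    linarith
  have hS2 : 2 ≤ finrank K ↥S := by
    have h1 := finrank_le_map_add W₁ (mulVecRight (K := K) a)
    have h2 : finrank K ↥(W₁.map (mulVecRight (K := K) a)) ≤ finrank K ↥S :=
      Submodule.finrank_mono hmapS
    have h3 : finrank K ↥(W₁ ⊓ LinearMap.ker (mulVecRight (K := K) a))
        ≤ finrank K ↥(LinearMap.ker (mulVecRight (K := K) a)) :=
      Submodule.finrank_mono inf_le_right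
    linarith
  obtain ⟨w, hwS, hwa⟩ : ∃ w ∈ S, w ∉ Submodule.span K {a} := by
    rw [← SetLike.not_le_iff_exists]
    intro hle
    have h5 := Submodule.finrank_mono hle
    rw [finrank_span_singleton ha0] at h5
    linarith
  -- the space T of columns u with a ⊗ u ∈ V has dimension ≥ 2
  set T := V.comap (vecMulVecLeft (K := K) a) with hTdef
  have hmapT : W₁.map (vecMulLeft (K := K) b) ≤ T := by
    rintro _ ⟨x, hx, rfl⟩
    simp only [hTdef, Submodule.mem_comap, vecMulVecLeft_apply, vecMulLeft_apply]
    rw [← Stmt13Aux.vecMulVec_mul, ← hvab]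
    exact hVr v hvV x ((NonUnitalSubalgebra.mem_toSubmodule L).mp hx)
  have hkerB : finrank K ↥(LinearMap.ker (vecMulLeft (K := K) b)) + n = n * n := by
    have h := LinearMap.finrank_range_add_finrank_ker (vecMulLeft (K := K) b)
    rw [LinearMap.range_eq_top.mpr (vecMulLeft_surjective hb0), finrank_top,
      Module.finrank_pi, Fintype.card_fin, hA] at h
    linarith
  have hT2 : 2 ≤ finrank K ↥T := by
    have h1 := finrank_le_map_add W₁ (vecMulLeft (K := K) b)
    have h2 : finrank K ↥(W₁.map (vecMulLeft (K := K) b)) ≤ finrank K ↥T :=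
      Submodule.finrank_mono hmapT
    have h3 : finrank K ↥(W₁ ⊓ LinearMap.ker (vecMulLeft (K := K) b))
        ≤ finrank K ↥(LinearMap.ker (vecMulLeft (K := K) b)) :=
      Submodule.finrank_mono inf_le_right
    linarith
  obtain ⟨u, huT, hub⟩ : ∃ u ∈ T, u ∉ Submodule.span K {b} := by
    rw [← SetLike.not_le_iff_exists]
    intro hle
    have h5 := Submodule.finrank_mono hle
    rw [finrank_span_singleton hb0] at h5
    linarith
  -- build a rank 2 element of V, contradiction
  have hbu : LinearIndependent K ![b, u] := pair_indep hb0 hub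
  have hi₀ : 0 < n := by omega
  set i₀ : Fin n := ⟨0, hi₀⟩ with hi₀def
  obtain ⟨x₁, hx₁b, hx₁u⟩ := exists_matrix hbu (Pi.single i₀ 1) 0
  obtain ⟨x₂, hx₂b, hx₂u⟩ := exists_matrix hbu 0 (Pi.single i₀ 1)
  set e₁ := x₁ i₀ with he₁
  set e₂ := x₂ i₀ with he₂
  have hbe₁ : b ⬝ᵥ e₁ = 1 := by
    rw [he₁, dotProduct_comm]
    simpa [Matrix.mulVec, dotProduct] using congrFun hx₁b i₀
  have hue₁ : u ⬝ᵥ e₁ = 0 := by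
    rw [he₁, dotProduct_comm]
    simpa [Matrix.mulVec, dotProduct] using congrFun hx₁u i₀
  have hbe₂ : b ⬝ᵥ e₂ = 0 := by
    rw [he₂, dotProduct_comm]
    simpa [Matrix.mulVec, dotProduct] using congrFun hx₂b i₀
  have hue₂ : u ⬝ᵥ e₂ = 1 := by
    rw [he₂, dotProduct_comm]
    simpa [Matrix.mulVec, dotProduct] using congrFun hx₂u i₀
  set z := vecMulVec w b + vecMulVec a u with hzdef
  have hwV : vecMulVec w b ∈ V := by
    have := Submodule.mem_comap.mp hwS
    rwa [vecMulVecRight_apply] at this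
  have huV : vecMulVec a u ∈ V := by
    have := Submodule.mem_comap.mp huT
    rwa [vecMulVecLeft_apply] at this
  have hzV : z ∈ V := V.add_mem hwV huV
  have hz1 : z *ᵥ e₂ = a := by
    rw [hzdef, Matrix.add_mulVec, Stmt13Aux.vecMulVec_mulVec, Stmt13Aux.vecMulVec_mulVec, hbe₂, hue₂,
      zero_smul, one_smul, zero_add]
  have hz2 : z *ᵥ e₁ = w := by
    rw [hzdef, Matrix.add_mulVec, Stmt13Aux.vecMulVec_mulVec, Stmt13Aux.vecMulVec_mulVec, hbe₁, hue₁,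
      zero_smul, one_smul, add_zero]
  exact keyA z hzV e₂ e₁ (by rw [hz1, hz2]; exact pair_indep ha0 hwa)
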